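/- Consider the counter dynamics of a tape-symbol object during one TM-step simulation: it evolves through counter values 0,1,...,m+5 via the rules (increment inside membrane for k < φ(a), dissolve at k = φ(a), increment outside for φ(a) < k ≤ m, then enter primed membrane at m+1, wait at m+2 and m+3, dissolve or be deleted at m+4, re-enter at m+5 resetting to 0). Then every tape-symbol object not under the head returns to counter 0 in the membrane (i, j+1) after exactly m+6 steps, and exactly one dissolution of each of the membranes (i,j) and (i,j)' occurs per phase. -/
import Mathlib


/-- Local state of a tape-symbol object: a counter together with a location
(`0` = inside membrane `(i,j)`, `1` = in the skin, `2` = inside `(i,j)'`).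
One step of its deterministic evolution (when not under the head), with
`ta = φ(a)` the dissolution time and `m` the alphabet size: increment inside
for `k < ta`, dissolve at `k = ta`, increment outside for `ta < k ≤ m`, enter
the primed membrane at `m+1`, wait at `m+2` and `m+3`, dissolve the primed
membrane at `m+4`, re-enter the next membrane at `m+5` resetting to `0`. -/
def symStep (m ta : ℕ) (c : ℕ × ℕ) : ℕ × ℕ :=
  let k := c.1
  if k < ta then (k + 1, c.2)
  else if k = ta then (k + 1, 1)
  else if k ≤ m then (k + 1, 1)
  else if k = m + 1 then (k + 1, 2)
  else if k = m + 2 ∨ k = m + 3 then (k + 1, 2)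
  else if k = m + 4 then (k + 1, 1)
  else (0, 0)


set_option maxHeartbeats 1000000

def symF (m ta t : ℕ) : ℕ × ℕ :=
  if t ≤ ta then (t, 0)
  else if t ≤ m + 1 then (t, 1)
  else if t ≤ m + 4 then (t, 2)
  else if t = m + 5 then (t, 1)
  else (0, 0)

lemma symF_step (m ta t : ℕ) (hta : 1 ≤ ta ∧ ta ≤ m) (ht : t < m + 6) :
    symStep m ta (symF m ta t) = symF m ta (t + 1) := by
  obtain ⟨h1, h2⟩ := hta
  simp only [symStep, symF]
  split_ifs <;> simp only [Prod.mk.injEq] <;> omega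

lemma symF_iter (m ta t : ℕ) (hta : 1 ≤ ta ∧ ta ≤ m) (ht : t ≤ m + 6) :
    (symStep m ta)^[t] (0, 0) = symF m ta t := by
  induction t with
  | zero => simp [symF]
  | succ n ih =>
    rw [Function.iterate_succ_apply', ih (by omega), symF_step m ta n hta (by omega)]

/-- A tape-symbol object not under the head returns to counter `0` inside the
membrane of the next phase after exactly `m+6` steps, and exactly one
dissolution of the membrane `(i,j)` (a step from state `(φ(a), 0)`) and exactly
one dissolution of `(i,j)'` (a step from state `(m+4, 2)`) occur per phase. -/
theorem symbol_cycle (m ta : ℕ) (hta : 1 ≤ ta ∧ ta ≤ m) :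
    (symStep m ta)^[m + 6] (0, 0) = (0, 0) ∧
    ((Finset.range (m + 6)).filter
      fun t => (symStep m ta)^[t] (0, 0) = (ta, 0)).card = 1 ∧
    ((Finset.range (m + 6)).filter
      fun t => (symStep m ta)^[t] (0, 0) = (m + 4, 2)).card = 1 := by
  obtain ⟨h1, h2⟩ := hta
  have key : ∀ t ≤ m + 6, (symStep m ta)^[t] (0, 0) = symF m ta t :=
    fun t ht => symF_iter m ta t ⟨h1, h2⟩ ht
  refine ⟨by
    rw [key _ le_rfl]; unfold symF
    rw [if_neg (by omega), if_neg (by omega), if_neg (by omega), if_neg (by omega)], ?_, ?_⟩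
  · have : ((Finset.range (m + 6)).filter
        fun t => (symStep m ta)^[t] (0, 0) = (ta, 0)) = {ta} := by
      ext t
      simp only [Finset.mem_filter, Finset.mem_range, Finset.mem_singleton]
      constructor
      · rintro ⟨ht, he⟩
        rw [key t (by omega)] at he
        unfold symF at he
        split_ifs at he <;> simp_all <;> omega
      · intro h; subst h
        refine ⟨by omega, ?_⟩
        rw [key t (by omega)]
        unfold symF
        rw [if_pos (by omega)]
    rw [this]; simp
  · have : ((Finset.range (m + 6)).filter
        fun t => (symStep m ta)^[t] (0, 0) = (m + 4, 2)) = {m + 4} := by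
      ext t
      simp only [Finset.mem_filter, Finset.mem_range, Finset.mem_singleton]
      constructor
      · rintro ⟨ht, he⟩
        rw [key t (by omega)] at he
        unfold symF at he
        split_ifs at he <;> simp_all <;> omega
      · intro h; subst h
        refine ⟨by omega, ?_⟩
        rw [key (m + 4) (by omega)]
        unfold symF
        rw [if_neg (by omega), if_neg (by omega), if_pos (by omega)]
    rw [this]; simp
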